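/- Let n, k ≥ 1 and consider the k-nearest neighbor platoon P(n,k). If S ⊆ {1,…,n} is a nonempty set of reference vehicles with F = {1,…,n} \ S nonempty and |S| < n/(2k+1), then the smallest eigenvalue of the grounded Laplacian satisfies λ_1(L_g) < 1; equivalently, with fewer than ⌈n/(2k+1)⌉ reference vehicles, no arrangement achieves H∞ norm 1/λ_1(L_g) ≤ 1 for the velocity tracking dynamics. -/

import Mathlib

open scoped Matrix

/-- The `k`-nearest neighbor platoon `P(n,k)`: the graph on `{1,…,n}` (modeled as `Fin n`)
in which distinct vertices `i, j` are adjacent iff `|i − j| ≤ k`. -/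
def platoon (n k : ℕ) : SimpleGraph (Fin n) where
  Adj i j := i ≠ j ∧ ((i : ℤ) - (j : ℤ)).natAbs ≤ k
  symm := ⟨by
    intro i j h
    exact ⟨h.1.symm, by omega⟩⟩
  loopless := ⟨fun i h => h.1 rfl⟩

instance (n k : ℕ) : DecidableRel (platoon n k).Adj :=
  fun i j => inferInstanceAs (Decidable (i ≠ j ∧ ((i : ℤ) - (j : ℤ)).natAbs ≤ k))

/-- The grounded Laplacian: the principal submatrix of the Laplacian of `G`
obtained by deleting the rows and columns indexed by the grounded set `S`. -/
noncomputable def groundedLaplacian {V : Type*} [Fintype V] [DecidableEq V]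
    (G : SimpleGraph V) [DecidableRel G.Adj] (S : Finset V) :
    Matrix {v : V // v ∉ S} {v : V // v ∉ S} ℝ :=
  (G.lapMatrix ℝ).submatrix (fun i => (i : V)) (fun j => (j : V))

section aux

open Finset Matrix

/-- Degree bound in the platoon graph. -/
lemma platoon_degree_le (n k : ℕ) (j : Fin n) : (platoon n k).degree j ≤ 2 * k := by
  classical
  have hsub : ((platoon n k).neighborFinset j).card ≤
      ((Finset.Icc ((j : ℤ) - k) ((j : ℤ) + k)).erase (j : ℤ)).card := by
    refine Finset.card_le_card_of_injOn (fun v => (v : ℤ)) ?_ ?_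
    · intro v hv
      rw [Finset.mem_coe, SimpleGraph.mem_neighborFinset] at hv
      obtain ⟨hne, habs⟩ := hv
      simp only [Finset.mem_coe, Finset.mem_erase, Finset.mem_Icc]
      have : (v : ℤ) ≠ (j : ℤ) := by
        intro h
        exact hne (Fin.ext (by exact_mod_cast h)).symm
      omega
    · intro a _ b _ h
      have h' : (a : ℤ) = (b : ℤ) := h
      exact Fin.ext (by exact_mod_cast h')
  have hmem : (j : ℤ) ∈ Finset.Icc ((j : ℤ) - k) ((j : ℤ) + k) := by
    simp only [Finset.mem_Icc]; omega
  rw [Finset.card_erase_of_mem hmem, Int.card_Icc] at hsub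
  rw [SimpleGraph.degree]
  omega

end aux

/-- if the reference set `S` of `P(n,k)` satisfies `|S| < n/(2k+1)`, then the
smallest eigenvalue of the grounded Laplacian is less than `1`: there is an eigenvalue
`μ < 1` (equivalently, the `H∞` norm `1/λ₁(L_g)` exceeds `1`). -/
theorem platoon_too_few_references (n k : ℕ) (hn : 1 ≤ n) (hk : 1 ≤ k)
    (S : Finset (Fin n)) (hS : S.Nonempty) (hF : Sᶜ.Nonempty)
    (hcard : (S.card : ℝ) < (n : ℝ) / (2 * k + 1)) :
    ∃ μ ∈ spectrum ℝ (groundedLaplacian (platoon n k) S), μ < 1 := by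

  classical
  open scoped Pointwise in
  by_contra hcon
  push_neg at hcon
  set G := platoon n k with hGdef
  set A := groundedLaplacian G S with hAdef
  have hHerm : A.IsHermitian := by
    refine Matrix.IsHermitian.ext fun i j => ?_
    simp only [hAdef, groundedLaplacian, Matrix.submatrix_apply, star_trivial]
    exact (G.isSymm_lapMatrix (R := ℝ)).apply _ _
  -- all eigenvalues of A - 1 are nonnegative
  set B : Matrix {v : Fin n // v ∉ S} {v : Fin n // v ∉ S} ℝ := A - 1 with hBdef
  have hBHerm : B.IsHermitian := hHerm.sub Matrix.isHermitian_one
  have hBeig : ∀ i, 0 ≤ hBHerm.eigenvalues i := by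
    intro i
    have hmem : hBHerm.eigenvalues i ∈ spectrum ℝ B :=
      hBHerm.eigenvalues_mem_spectrum_real i
    have h1 : hBHerm.eigenvalues i + 1 ∈ spectrum ℝ A := by
      have := spectrum.add_singleton_eq B (1 : ℝ)
      have hmem2 : hBHerm.eigenvalues i + 1 ∈ spectrum ℝ B + ({1} : Set ℝ) :=
        Set.add_mem_add hmem rfl
      rw [this] at hmem2
      have hBA : B + algebraMap ℝ _ (1 : ℝ) = A := by
        rw [hBdef, map_one, sub_add_cancel]
      rwa [hBA] at hmem2
    have := hcon _ h1
    linarith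
  have hBpsd : B.PosSemidef := hBHerm.posSemidef_iff_eigenvalues_nonneg.mpr hBeig
  -- quadratic form with the all-ones vector
  set y : {v : Fin n // v ∉ S} → ℝ := fun _ => 1 with hy
  have hq : 0 ≤ y ⬝ᵥ (B *ᵥ y) := by
    have := hBpsd.dotProduct_mulVec_nonneg y
    simpa using this
  -- compute the quadratic form
  set Q : ℝ := ∑ i : {v : Fin n // v ∉ S}, ∑ j : {v : Fin n // v ∉ S}, A i j with hQ
  have hcardF : Fintype.card {v : Fin n // v ∉ S} = Sᶜ.card := by
    simp [Fintype.card_subtype, Finset.filter_not, Finset.compl_eq_univ_sdiff]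
  have hquad : y ⬝ᵥ (B *ᵥ y) = Q - (Sᶜ.card : ℝ) := by
    rw [hBdef, Matrix.sub_mulVec, dotProduct_sub, Matrix.one_mulVec]
    have h1 : y ⬝ᵥ (A *ᵥ y) = Q := by
      simp [dotProduct, Matrix.mulVec, hy, hQ]
    have h2 : y ⬝ᵥ y = (Sᶜ.card : ℝ) := by
      simp [dotProduct, hy, hcardF]
    rw [h1, h2]
  -- rewrite Q as a sum over Sᶜ
  have hQ2 : Q = ∑ i ∈ Sᶜ, ∑ j ∈ Sᶜ, G.lapMatrix ℝ i j := by
    rw [hQ]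
    symm
    rw [Finset.sum_subtype Sᶜ (fun x => Finset.mem_compl)
      (fun i => ∑ j ∈ Sᶜ, G.lapMatrix ℝ i j)]
    apply Finset.sum_congr rfl
    intro i _
    rw [Finset.sum_subtype Sᶜ (fun x => Finset.mem_compl)
      (fun j => G.lapMatrix ℝ (i : Fin n) j)]
    rfl
  -- rows of the Laplacian sum to zero
  have hrow : ∀ i : Fin n, ∑ j : Fin n, G.lapMatrix ℝ i j = 0 := by
    intro i
    have := congrFun (G.lapMatrix_mulVec_const_eq_zero (R := ℝ)) i
    simpa [Matrix.mulVec, dotProduct] using this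
  -- hence Q = number of edges from F to S
  have hQ3 : Q = ∑ i ∈ Sᶜ, ∑ j ∈ S, (if G.Adj i j then (1 : ℝ) else 0) := by
    rw [hQ2]
    apply Finset.sum_congr rfl
    intro i hi
    have hsplit : ∑ j : Fin n, G.lapMatrix ℝ i j
        = (∑ j ∈ Sᶜ, G.lapMatrix ℝ i j) + ∑ j ∈ S, G.lapMatrix ℝ i j := by
      rw [← Finset.sum_add_sum_compl S (fun j => G.lapMatrix ℝ i j)]
      ring
    have h0 := hrow i
    rw [hsplit] at h0
    have : ∑ j ∈ Sᶜ, G.lapMatrix ℝ i j = -∑ j ∈ S, G.lapMatrix ℝ i j := by linarith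
    rw [this, ← Finset.sum_neg_distrib]
    apply Finset.sum_congr rfl
    intro j hj
    have hij : i ≠ j := by
      intro h
      rw [Finset.mem_compl] at hi
      exact hi (h ▸ hj)
    simp [SimpleGraph.lapMatrix, SimpleGraph.degMatrix, Matrix.diagonal_apply_ne _ hij,
      SimpleGraph.adjMatrix]
  -- bound Q by the degrees of vertices in S
  have hQle : Q ≤ (2 * k : ℝ) * S.card := by
    rw [hQ3]
    have hle1 : ∑ i ∈ Sᶜ, ∑ j ∈ S, (if G.Adj i j then (1 : ℝ) else 0)
        ≤ ∑ i : Fin n, ∑ j ∈ S, (if G.Adj i j then (1 : ℝ) else 0) := by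
      apply Finset.sum_le_sum_of_subset_of_nonneg (Finset.subset_univ _)
      intro i _ _
      apply Finset.sum_nonneg
      intro j _
      positivity
    refine hle1.trans ?_
    rw [Finset.sum_comm]
    have hdeg : ∀ j ∈ S, ∑ i : Fin n, (if G.Adj i j then (1 : ℝ) else 0) ≤ (2 * k : ℝ) := by
      intro j _
      have : ∑ i : Fin n, (if G.Adj i j then (1 : ℝ) else 0) = (G.degree j : ℝ) := by
        rw [SimpleGraph.degree_eq_sum_if_adj]
        apply Finset.sum_congr rfl
        intro i _
        exact if_congr (G.adj_comm i j) rfl rfl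
      rw [this]
      exact_mod_cast platoon_degree_le n k j
    calc ∑ j ∈ S, ∑ i : Fin n, (if G.Adj i j then (1 : ℝ) else 0)
        ≤ ∑ _j ∈ S, (2 * k : ℝ) := Finset.sum_le_sum hdeg
      _ = (2 * k : ℝ) * S.card := by rw [Finset.sum_const]; ring
  -- arithmetic: 2k|S| < |Sᶜ|
  have hnat : S.card * (2 * k + 1) < n := by
    have hpos : (0 : ℝ) < 2 * k + 1 := by positivity
    have := (lt_div_iff₀ hpos).mp hcard
    exact_mod_cast this
  have hScard : S.card ≤ n := by
    have := Finset.card_le_univ S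
    simpa using this
  have hcompl : Sᶜ.card = n - S.card := by
    rw [Finset.card_compl]
    simp
  have hfin : (2 * k : ℝ) * S.card < (Sᶜ.card : ℝ) := by
    have h1 : 2 * k * S.card + S.card = S.card * (2 * k + 1) := by ring
    have h2 : 2 * k * S.card < Sᶜ.card := by
      rw [hcompl]
      exact Nat.lt_sub_of_add_lt (h1 ▸ hnat)
    exact_mod_cast h2
  rw [hquad] at hq
  linarith
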